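/- Assume the θ-setup and additionally that N is odd and D is odd. Define the integer ρ = v·(u'·(C/(N·p)) + A·((u/p)·(1 − u'²) − u')) + 3·v₁·A₁·(u'−1). Then ρ is even. -/

import Mathlib

/-- The odd part of an integer: for `n ≠ 0`, `n = 2 ^ (padicValInt 2 n) * oddPart n`. -/
def oddPart (n : ℤ) : ℤ := n / 2 ^ (padicValInt 2 n)

lemma oddPart_odd {n : ℤ} (h : n ≠ 0) : Odd (oddPart n) := by
  obtain ⟨m, hm⟩ := padicValInt_dvd (p := 2) n
  push_cast at hm
  have h2 : (2:ℤ) ^ (padicValInt 2 n) ≠ 0 := by positivity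
  have hop : oddPart n = m := by
    rw [oddPart]
    nth_rewrite 1 [hm]
    rw [Int.mul_ediv_cancel_left _ h2]
  rw [hop, ← Int.not_even_iff_odd, even_iff_two_dvd]
  rintro ⟨t, ht⟩
  have hd : ((2:ℕ):ℤ) ^ (padicValInt 2 n + 1) ∣ n := ⟨t, by push_cast; nth_rewrite 1 [hm]; rw [ht]; ring⟩
  rw [padicValInt_dvd_iff] at hd
  rcases hd with h0 | hle
  · exact h h0
  · omega

lemma odd_cast_two {n : ℤ} (h : Odd n) : (n : ZMod 2) = 1 := by
  obtain ⟨k, hk⟩ := h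
  subst hk; push_cast
  have : (2 : ZMod 2) = 0 := by decide
  rw [this]; ring

/-- PROP21: in the θ-setup with `N` odd and `D` odd, the integer
`ρ = v·(u'·(C/(N·p)) + A·((u/p)·(1 − u'²) − u')) + 3·v₁·A₁·(u'−1)` is even. -/
theorem prop21
    (N A B C u v p D ρ : ℤ)
    (hN : 2 ≤ N) (hA : Int.gcd A N = 1) (hv : v ≠ 0)
    (hp : Prime p) (hp6 : ¬ p ∣ 6 * N)
    (hNC : N ∣ C) (hpC : p ∣ C) (hpu : p ∣ u)
    (hpeq : p = u * (u - v * B) + v ^ 2 * A * C)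
    (hD : D = B ^ 2 - 4 * A * C)
    (hNodd : Odd N) (hDodd : Odd D)
    (hρ : ρ = v * ((u - v * B) * (C / (N * p)) +
      A * ((u / p) * (1 - (u - v * B) ^ 2) - (u - v * B))) +
      3 * oddPart v * oddPart A * ((u - v * B) - 1)) :
    Even ρ := by
  -- A ≠ 0
  have hA0 : A ≠ 0 := by
    rintro rfl
    simp [Int.gcd] at hA
    omega
  -- p is odd
  have hpodd : Odd p := by
    rw [← Int.not_even_iff_odd, even_iff_two_dvd]
    intro h2p
    apply hp6
    have hpn : p.natAbs.Prime := Int.prime_iff_natAbs_prime.mp hp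
    have h2n : 2 ∣ p.natAbs := by
      have := Int.natAbs_dvd_natAbs.mpr h2p
      simpa using this
    have : p.natAbs = 2 := ((Nat.Prime.eq_one_or_self_of_dvd hpn 2 h2n).resolve_left (by norm_num)).symm
    have hp2 : p ∣ 2 := by
      rw [← Int.natAbs_dvd, this]; norm_num
    exact hp2.trans ⟨3 * N, by ring⟩
  -- B is odd
  have hBodd : Odd B := by
    have : Odd (B ^ 2) := by
      have : B ^ 2 = D + 2 * (2 * (A * C)) := by rw [hD]; ring
      rw [this]
      exact hDodd.add_even ⟨2 * (A * C), by ring⟩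
    rcases Int.even_or_odd B with he | ho
    · exact absurd (by simpa [pow_two] using he.mul_right B) (Int.not_even_iff_odd.mpr this)
    · exact ho
  -- N*p ∣ C
  have hpN : ¬ p ∣ N := fun h => hp6 (h.trans ⟨6, by ring⟩)
  have hcop : IsCoprime N p := ((Prime.coprime_iff_not_dvd hp).mpr hpN).symm
  have hNpC : N * p ∣ C := hcop.mul_dvd hNC hpC
  obtain ⟨c, hC⟩ := hNpC
  obtain ⟨q, hu⟩ := hpu
  have hp0 : p ≠ 0 := hp.ne_zero
  have hN0 : N ≠ 0 := by omega
  have hNp0 : N * p ≠ 0 := mul_ne_zero hN0 hp0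
  have hc : C / (N * p) = c := by rw [hC, Int.mul_ediv_cancel_left _ hNp0]
  have hq : u / p = q := by rw [hu, Int.mul_ediv_cancel_left _ hp0]
  -- reduce to ZMod 2
  rw [even_iff_two_dvd]
  have : ((2:ℕ):ℤ) ∣ ρ := by
    rw [← ZMod.intCast_zmod_eq_zero_iff_dvd]
    rw [hρ, hc, hq, hu]
    have key : ((p : ℤ) : ZMod 2) = ((p * q * (p * q - v * B) + v ^ 2 * A * (N * p * c) : ℤ) : ZMod 2) := by
      exact_mod_cast congrArg (fun z : ℤ => (z : ZMod 2)) (by rw [← hu, ← hC]; exact hpeq)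
    have hB2 : ((B : ℤ) : ZMod 2) = 1 := odd_cast_two hBodd
    have hN2 : ((N : ℤ) : ZMod 2) = 1 := odd_cast_two hNodd
    have hp2 : ((p : ℤ) : ZMod 2) = 1 := odd_cast_two hpodd
    have hv2 : ((oddPart v : ℤ) : ZMod 2) = 1 := odd_cast_two (oddPart_odd hv)
    have hA2 : ((oddPart A : ℤ) : ZMod 2) = 1 := odd_cast_two (oddPart_odd hA0)
    push_cast at key ⊢
    rw [hB2, hN2, hp2] at key
    rw [hB2, hp2, hv2, hA2]
    generalize ((v : ℤ) : ZMod 2) = vv at key ⊢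
    generalize ((A : ℤ) : ZMod 2) = aa at key ⊢
    generalize ((q : ℤ) : ZMod 2) = qq at key ⊢
    generalize ((c : ℤ) : ZMod 2) = cc at key ⊢
    revert key
    revert vv aa qq cc
    decide
  exact_mod_cast this
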